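/- Let Λ be a finite set, m>0, and let p:Λ×Λ→[0,∞) satisfy p(i,i)=0 and the doubly-stochastic-modulo-a-constant condition: for all i,k∈Λ, ∑_{j∈Λ}(p(i,j) − p(j,k)) = 0. For 0≤φ<1 let ν_φ be the product probability measure on ℕ^Λ whose marginal at every site is ν_φ(n) = (1−φ)^{m/2} φ^n Γ(m/2+n)/(n! Γ(m/2)). Then ν_φ is stationary for the inclusion process generator: for every bounded function f:ℕ^Λ→ℝ, ∑_{η∈ℕ^Λ} ν_φ(η) ∑_{i,j∈Λ} p(i,j) η_i (m/2 + η_j)(f(η^{i,j}) − f(η)) = 0, where η^{i,j} is obtained from η by moving one particle from site i to site j (the double sum over η being absolutely convergent). -/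

import Mathlib

open Filter Topology MeasureTheory

/-- The configuration obtained from `η` by moving one particle from site `i` to site `j`. -/
def moveParticle {Λ : Type*} [DecidableEq Λ] (η : Λ → ℕ) (i j : Λ) : Λ → ℕ :=
  fun k => if k = i then η i - 1 else if k = j then η j + 1 else η k

/-- Single-site marginal of the stationary product measure of the inclusion process:
`ν_φ(n) = (1−φ)^{m/2} φ^n Γ(m/2+n)/(n! Γ(m/2))`. -/
noncomputable def nuMarginal (m φ : ℝ) (n : ℕ) : ℝ :=
  (1 - φ) ^ (m / 2) * φ ^ n * Real.Gamma (m / 2 + n) / (n.factorial * Real.Gamma (m / 2))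

/-- The product measure `ν_φ` on `ℕ^Λ` with the above marginal at every site. -/
noncomputable def nuProd {Λ : Type*} [Fintype Λ] (m φ : ℝ) (η : Λ → ℕ) : ℝ :=
  ∏ i, nuMarginal m φ (η i)

section aux

lemma nuMarginal_nonneg {m φ : ℝ} (hm : 0 < m) (hφ0 : 0 ≤ φ) (hφ1 : φ < 1) (n : ℕ) :
    0 ≤ nuMarginal m φ n := by
  have h1 : 0 < Real.Gamma (m / 2 + n) :=
    Real.Gamma_pos_of_pos (by positivity)
  have h2 : 0 < Real.Gamma (m / 2) := Real.Gamma_pos_of_pos (by positivity)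
  have h3 : (0:ℝ) ≤ (1 - φ) ^ (m / 2) := Real.rpow_nonneg (by linarith) _
  have h4 : (0:ℝ) < n.factorial := by exact_mod_cast n.factorial_pos
  unfold nuMarginal
  positivity

lemma nuMarginal_rec {m φ : ℝ} (hm : 0 < m) (n : ℕ) :
    ((n:ℝ) + 1) * nuMarginal m φ (n + 1) = φ * (m / 2 + n) * nuMarginal m φ n := by
  have hx : m / 2 + (n:ℝ) ≠ 0 := by positivity
  have hΓ : Real.Gamma (m / 2 + (n + 1 : ℕ)) = (m / 2 + n) * Real.Gamma (m / 2 + n) := by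
    have : (m / 2 + ((n:ℝ) + 1)) = (m / 2 + n) + 1 := by ring
    rw [Nat.cast_add, Nat.cast_one, this, Real.Gamma_add_one hx]
  have h2 : 0 < Real.Gamma (m / 2) := Real.Gamma_pos_of_pos (by positivity)
  have h4 : ((n.factorial : ℝ)) ≠ 0 := by exact_mod_cast n.factorial_ne_zero
  unfold nuMarginal
  rw [hΓ, Nat.factorial_succ]
  push_cast
  field_simp
  ring

lemma summable_weight {m φ : ℝ} (hm : 0 < m) (hφ0 : 0 ≤ φ) (hφ1 : φ < 1) :
    Summable (fun n : ℕ => (m / 2 + n) * nuMarginal m φ n) := by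
  set r : ℝ := (1 + φ) / 2 with hr
  have hr1 : r < 1 := by rw [hr]; linarith
  have hrφ : 0 < r - φ := by rw [hr]; linarith
  apply summable_of_ratio_norm_eventually_le hr1
  have hN := exists_nat_ge (φ * (m / 2) / (r - φ))
  obtain ⟨N, hN⟩ := hN
  filter_upwards [Filter.eventually_ge_atTop N] with n hn
  have hnn : ∀ k : ℕ, 0 ≤ (m / 2 + (k:ℝ)) * nuMarginal m φ k := fun k =>
    mul_nonneg (by positivity) (nuMarginal_nonneg hm hφ0 hφ1 k)
  rw [Real.norm_of_nonneg (hnn (n+1)), Real.norm_of_nonneg (hnn n)]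
  -- (m/2+n+1) * ν(n+1) ≤ r * ((m/2+n) * ν n)
  have hrec := nuMarginal_rec (φ := φ) hm n
  have hpos : (0:ℝ) < (n:ℝ) + 1 := by positivity
  have hkey : φ * (m / 2 + (n:ℝ) + 1) ≤ r * ((n:ℝ) + 1) := by
    have h1 : φ * (m / 2) / (r - φ) ≤ (n:ℝ) := le_trans hN (by exact_mod_cast hn)
    have h2 : φ * (m / 2) ≤ (r - φ) * n := by
      rw [div_le_iff₀ hrφ] at h1; linarith [h1]
    nlinarith
  have hν : nuMarginal m φ (n+1) = φ * (m / 2 + n) * nuMarginal m φ n / ((n:ℝ) + 1) := by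
    field_simp at hrec ⊢
    linarith [hrec]
  rw [hν, ← mul_div_assoc, div_le_iff₀ hpos]
  push_cast
  have hνn : 0 ≤ nuMarginal m φ n := nuMarginal_nonneg hm hφ0 hφ1 n
  nlinarith [mul_nonneg (mul_nonneg hφ0 (by positivity : (0:ℝ) ≤ m/2 + (n:ℝ))) hνn,
    mul_nonneg (by positivity : (0:ℝ) ≤ m/2 + (n:ℝ)) hνn]

end aux

section aux2

variable {m φ : ℝ}

lemma summable_nu (hm : 0 < m) (hφ0 : 0 ≤ φ) (hφ1 : φ < 1) :
    Summable (fun n : ℕ => nuMarginal m φ n) := by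
  refine Summable.of_nonneg_of_le (fun n => nuMarginal_nonneg hm hφ0 hφ1 n)
    (fun n => ?_) ((summable_weight hm hφ0 hφ1).mul_left (2 / m))
  have hν := nuMarginal_nonneg hm hφ0 hφ1 n
  rw [← mul_assoc]
  have h1 : (2 / m) * (m / 2 + (n:ℝ)) = 1 + 2 * n / m := by field_simp
  rw [h1]
  nlinarith [mul_nonneg (div_nonneg (by positivity : (0:ℝ) ≤ 2 * n) hm.le) hν]

lemma summable_nu_n (hm : 0 < m) (hφ0 : 0 ≤ φ) (hφ1 : φ < 1) :
    Summable (fun n : ℕ => (n : ℝ) * nuMarginal m φ n) := by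
  refine Summable.of_nonneg_of_le
    (fun n => mul_nonneg (Nat.cast_nonneg n) (nuMarginal_nonneg hm hφ0 hφ1 n))
    (fun n => ?_) (summable_weight hm hφ0 hφ1)
  have hν := nuMarginal_nonneg hm hφ0 hφ1 n
  nlinarith

/-- Summability of a product function on a finite product of copies of `ℕ`. -/
lemma summable_pi_prod {Λ : Type*} [Fintype Λ] (g : Λ → ℕ → ℝ)
    (h0 : ∀ k n, 0 ≤ g k n) (hs : ∀ k, Summable (g k)) :
    Summable (fun η : Λ → ℕ => ∏ k, g k (η k)) := by
  apply summable_of_sum_le (c := ∏ k, ∑' n, g k n)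
  · intro η
    exact Finset.prod_nonneg fun k _ => h0 k _
  · intro u
    classical
    set t : Λ → Finset ℕ := fun k => u.image (fun η => η k) with ht
    have hsub : u ⊆ Fintype.piFinset t := by
      intro η hη
      rw [Fintype.mem_piFinset]
      intro k
      exact Finset.mem_image_of_mem _ hη
    calc ∑ η ∈ u, ∏ k, g k (η k)
        ≤ ∑ η ∈ Fintype.piFinset t, ∏ k, g k (η k) :=
          Finset.sum_le_sum_of_subset_of_nonneg hsub
            (fun η _ _ => Finset.prod_nonneg fun k _ => h0 k _)
      _ = ∏ k, ∑ n ∈ t k, g k n := (Finset.prod_univ_sum t g).symm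
      _ ≤ ∏ k, ∑' n, g k n := by
          apply Finset.prod_le_prod
          · exact fun k _ => Finset.sum_nonneg fun n _ => h0 k n
          · exact fun k _ => Summable.sum_le_tsum (t k) (fun n _ => h0 k n) (hs k)

lemma prod_split {Λ : Type*} [Fintype Λ] [DecidableEq Λ] {i j : Λ} (hij : i ≠ j)
    (h : Λ → ℝ) :
    ∏ k, h k = h i * h j * ∏ k ∈ (Finset.univ.erase i).erase j, h k := by
  have hj : j ∈ Finset.univ.erase i := Finset.mem_erase.2 ⟨Ne.symm hij, Finset.mem_univ j⟩
  rw [mul_assoc, Finset.mul_prod_erase _ h hj, Finset.mul_prod_erase _ h (Finset.mem_univ i)]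

lemma moveParticle_apply_i {Λ : Type*} [DecidableEq Λ] (η : Λ → ℕ) (i j : Λ) :
    moveParticle η i j i = η i - 1 := by simp [moveParticle]

lemma moveParticle_apply_j {Λ : Type*} [DecidableEq Λ] {i j : Λ} (hij : i ≠ j) (η : Λ → ℕ) :
    moveParticle η i j j = η j + 1 := by simp [moveParticle, Ne.symm hij]

lemma moveParticle_apply_other {Λ : Type*} [DecidableEq Λ] {i j k : Λ} (hki : k ≠ i)
    (hkj : k ≠ j) (η : Λ → ℕ) : moveParticle η i j k = η k := by
  simp [moveParticle, hki, hkj]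

lemma moveParticle_inv {Λ : Type*} [DecidableEq Λ] {i j : Λ} (hij : i ≠ j) (η : Λ → ℕ)
    (hi : 1 ≤ η i) : moveParticle (moveParticle η i j) j i = η := by
  funext k
  by_cases hki : k = i
  · subst hki
    rw [moveParticle_apply_j (Ne.symm hij), moveParticle_apply_i]
    omega
  · by_cases hkj : k = j
    · subst hkj
      rw [moveParticle_apply_i, moveParticle_apply_j hij]
      omega
    · rw [moveParticle_apply_other hkj hki, moveParticle_apply_other hki hkj]

/-- The key single-change-of-variables identity for the weights. -/
lemma key_id {Λ : Type*} [Fintype Λ] [DecidableEq Λ] (hm : 0 < m) {i j : Λ} (hij : i ≠ j)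
    (η : Λ → ℕ) (hi : 1 ≤ η i) :
    nuProd m φ η * (η i : ℝ) * (m / 2 + (η j : ℝ)) =
      nuProd m φ (moveParticle η i j) * ((moveParticle η i j) j : ℝ) *
        (m / 2 + ((moveParticle η i j) i : ℝ)) := by
  set ξ := moveParticle η i j with hξ
  have hξi : ξ i = η i - 1 := moveParticle_apply_i η i j
  have hξj : ξ j = η j + 1 := moveParticle_apply_j hij η
  obtain ⟨a, ha⟩ : ∃ a, η i = a + 1 := ⟨η i - 1, by omega⟩
  have hξia : ξ i = a := by omega
  set b := η j with hb
  have hP : nuProd m φ η = nuMarginal m φ (a+1) * nuMarginal m φ b *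
      ∏ k ∈ (Finset.univ.erase i).erase j, nuMarginal m φ (η k) := by
    rw [nuProd, prod_split hij, ha, hb]
  have hQ : nuProd m φ ξ = nuMarginal m φ a * nuMarginal m φ (b+1) *
      ∏ k ∈ (Finset.univ.erase i).erase j, nuMarginal m φ (η k) := by
    rw [nuProd, prod_split hij, hξia, hξj]
    congr 1
    apply Finset.prod_congr rfl
    intro k hk
    rw [Finset.mem_erase, Finset.mem_erase] at hk
    rw [hξ, moveParticle_apply_other hk.2.1 hk.1]
  set T := ∏ k ∈ (Finset.univ.erase i).erase j, nuMarginal m φ (η k) with hT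
  have hrec1 := nuMarginal_rec (φ := φ) hm a
  have hrec2 := nuMarginal_rec (φ := φ) hm b
  rw [hP, hQ, ha, hξia, hξj]
  push_cast
  linear_combination (nuMarginal m φ b * (m/2 + (b:ℝ)) * T) * hrec1 -
    (nuMarginal m φ a * (m/2 + (a:ℝ)) * T) * hrec2

end aux2

section aux3

variable {m φ : ℝ} {Λ : Type*} [Fintype Λ] [DecidableEq Λ]

lemma summable_W (hm : 0 < m) (hφ0 : 0 ≤ φ) (hφ1 : φ < 1) {i j : Λ} (hij : i ≠ j) :
    Summable (fun η : Λ → ℕ => nuProd m φ η * (η i : ℝ) * (m / 2 + (η j : ℝ))) := by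
  classical
  set g : Λ → ℕ → ℝ := fun k n =>
    (if k = i then (n : ℝ) else 1) * (if k = j then m / 2 + (n : ℝ) else 1) *
      nuMarginal m φ n with hg
  have h0 : ∀ k n, 0 ≤ g k n := by
    intro k n
    have := nuMarginal_nonneg hm hφ0 hφ1 n
    rw [hg]
    have h1 : (0:ℝ) ≤ (if k = i then (n : ℝ) else 1) := by split <;> positivity
    have h2 : (0:ℝ) ≤ (if k = j then m / 2 + (n : ℝ) else 1) := by split <;> positivity
    positivity
  have hs : ∀ k, Summable (g k) := by
    intro k
    by_cases hki : k = i
    · subst hki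
      have : g k = fun n : ℕ => (n : ℝ) * nuMarginal m φ n := by
        funext n; rw [hg]; simp [hij]
      rw [this]; exact summable_nu_n hm hφ0 hφ1
    · by_cases hkj : k = j
      · subst hkj
        have : g k = fun n : ℕ => (m / 2 + (n : ℝ)) * nuMarginal m φ n := by
          funext n; rw [hg]; simp [hki]
        rw [this]; exact summable_weight hm hφ0 hφ1
      · have : g k = fun n => nuMarginal m φ n := by
          funext n; rw [hg]; simp [hki, hkj]
        rw [this]; exact summable_nu hm hφ0 hφ1
  have hpt : ∀ η : Λ → ℕ, ∏ k, g k (η k) =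
      nuProd m φ η * (η i : ℝ) * (m / 2 + (η j : ℝ)) := by
    intro η
    rw [hg]
    rw [Finset.prod_mul_distrib, Finset.prod_mul_distrib]
    have e1 : ∏ k, (if k = i then ((η k : ℝ)) else 1) = (η i : ℝ) := by
      rw [Finset.prod_ite_eq' Finset.univ i (fun k => ((η k : ℝ)))]
      simp
    have e2 : ∏ k, (if k = j then (m / 2 + (η k : ℝ)) else 1) = m / 2 + (η j : ℝ) := by
      rw [Finset.prod_ite_eq' Finset.univ j (fun k => (m / 2 + (η k : ℝ)))]
      simp
    rw [e1, e2, nuProd]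
    ring
  exact (summable_pi_prod g h0 hs).congr hpt

lemma move_tsum (hm : 0 < m) {i j : Λ} (hij : i ≠ j) (F : (Λ → ℕ) → ℝ) :
    ∑' η : Λ → ℕ, nuProd m φ η * (η i : ℝ) * (m / 2 + (η j : ℝ)) * F (moveParticle η i j) =
      ∑' ξ : Λ → ℕ, nuProd m φ ξ * (ξ j : ℝ) * (m / 2 + (ξ i : ℝ)) * F ξ := by
  classical
  have hmain : ∀ η : Λ → ℕ, 1 ≤ η i →
      nuProd m φ η * (η i : ℝ) * (m / 2 + (η j : ℝ)) * F (moveParticle η i j) =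
        nuProd m φ (moveParticle η i j) * ((moveParticle η i j) j : ℝ) *
          (m / 2 + ((moveParticle η i j) i : ℝ)) * F (moveParticle η i j) := by
    intro η hi
    rw [key_id hm hij η hi]
  have hsupp : ∀ ζ : Λ → ℕ,
      ζ ∈ Function.support (fun ξ : Λ → ℕ =>
        nuProd m φ ξ * (ξ j : ℝ) * (m / 2 + (ξ i : ℝ)) * F ξ) → 1 ≤ ζ j := by
    intro ζ hζ
    by_contra h
    push_neg at h
    have hz : ζ j = 0 := by omega
    apply hζ
    simp [hz]
  apply tsum_eq_tsum_of_ne_zero_bij (fun ξ => moveParticle ξ.1 j i)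
  · rintro ⟨ξ, hξ⟩ ⟨ξ', hξ'⟩ h
    have h1 := moveParticle_inv (Ne.symm hij) ξ (hsupp ξ hξ)
    have h2 := moveParticle_inv (Ne.symm hij) ξ' (hsupp ξ' hξ')
    simp only at h
    apply Subtype.ext
    calc ξ = moveParticle (moveParticle ξ j i) i j := h1.symm
      _ = moveParticle (moveParticle ξ' j i) i j := by rw [h]
      _ = ξ' := h2
  · rintro η hη
    have hi : 1 ≤ η i := by
      by_contra h
      push_neg at h
      have hz : η i = 0 := by omega
      apply hη
      simp [hz]
    refine ⟨⟨moveParticle η i j, ?_⟩, ?_⟩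
    · intro h0
      apply hη
      rw [Function.mem_support] at hη
      show nuProd m φ η * (η i : ℝ) * (m / 2 + (η j : ℝ)) * F (moveParticle η i j) = 0
      rw [hmain η hi]
      exact h0
    · exact moveParticle_inv hij η hi
  · rintro ⟨ξ, hξ⟩
    have hj : 1 ≤ ξ j := hsupp ξ hξ
    have hηi : 1 ≤ (moveParticle ξ j i) i := by
      rw [moveParticle_apply_j (Ne.symm hij)]
      omega
    simp only
    rw [hmain _ hηi, moveParticle_inv (Ne.symm hij) ξ hj]

omit [DecidableEq Λ] in
lemma cancel_sum (p : Λ → Λ → ℝ) (hp_ds : ∀ i k, ∑ j, (p i j - p j k) = 0) (ξ : Λ → ℕ) :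
    ∑ i, ∑ j, p i j * ((ξ j : ℝ) * (m / 2 + (ξ i : ℝ)) - (ξ i : ℝ) * (m / 2 + (ξ j : ℝ))) = 0 := by
  have hrow : ∀ k, ∑ j, p k j = ∑ j, p j k := by
    intro k
    have h := hp_ds k k
    rw [Finset.sum_sub_distrib] at h
    linarith
  have step : ∀ i j, p i j * ((ξ j : ℝ) * (m / 2 + (ξ i : ℝ)) - (ξ i : ℝ) * (m / 2 + (ξ j : ℝ)))
      = m / 2 * (p i j * (ξ j : ℝ)) - m / 2 * (p i j * (ξ i : ℝ)) := fun i j => by ring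
  simp_rw [step, Finset.sum_sub_distrib]
  rw [sub_eq_zero, Finset.sum_comm]
  apply Finset.sum_congr rfl
  intro j _
  calc ∑ i, m / 2 * (p i j * (ξ j : ℝ))
      = (m / 2 * (ξ j : ℝ)) * ∑ i, p i j := by
        rw [Finset.mul_sum]; apply Finset.sum_congr rfl; intros; ring
    _ = (m / 2 * (ξ j : ℝ)) * ∑ i, p j i := by rw [← hrow j]
    _ = ∑ i, m / 2 * (p j i * (ξ j : ℝ)) := by
        rw [Finset.mul_sum]; apply Finset.sum_congr rfl; intros; ring

end aux3

/-- **Stationarity of the homogeneous product measure for the inclusion process**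
(doubly-stochastic-modulo-a-constant case): for every bounded `f`,
`∑_η ν_φ(η) ∑_{i,j} p(i,j) η_i (m/2 + η_j)(f(η^{i,j}) − f(η)) = 0`,
the sum over `η` being absolutely convergent. -/
theorem inclusion_stationary_doubly_stochastic
    {Λ : Type*} [Fintype Λ] [DecidableEq Λ]
    (m : ℝ) (hm : 0 < m)
    (p : Λ → Λ → ℝ) (hp_nonneg : ∀ i j, 0 ≤ p i j) (hp_diag : ∀ i, p i i = 0)
    (hp_ds : ∀ i k, ∑ j, (p i j - p j k) = 0)
    (φ : ℝ) (hφ0 : 0 ≤ φ) (hφ1 : φ < 1)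
    (f : (Λ → ℕ) → ℝ) (hf : ∃ C, ∀ η, |f η| ≤ C) :
    Summable (fun η : Λ → ℕ =>
      |nuProd m φ η *
        ∑ i, ∑ j, p i j * (η i : ℝ) * (m / 2 + (η j : ℝ)) *
          (f (moveParticle η i j) - f η)|) ∧
    ∑' η : Λ → ℕ,
      nuProd m φ η *
        ∑ i, ∑ j, p i j * (η i : ℝ) * (m / 2 + (η j : ℝ)) *
          (f (moveParticle η i j) - f η) = 0 := by
  classical
  obtain ⟨C, hC⟩ := hf
  have hC0 : 0 ≤ C := le_trans (abs_nonneg _) (hC fun _ => 0)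
  have hu0 : ∀ η : Λ → ℕ, 0 ≤ nuProd m φ η := fun η =>
    Finset.prod_nonneg fun k _ => nuMarginal_nonneg hm hφ0 hφ1 _
  have hWnn : ∀ (i j : Λ) (η : Λ → ℕ),
      0 ≤ nuProd m φ η * (η i : ℝ) * (m / 2 + (η j : ℝ)) := fun i j η =>
    mul_nonneg (mul_nonneg (hu0 η) (by positivity)) (by positivity)
  have hW : ∀ i j : Λ, i ≠ j →
      Summable (fun η : Λ → ℕ => nuProd m φ η * (η i : ℝ) * (m / 2 + (η j : ℝ))) :=
    fun i j hij => summable_W hm hφ0 hφ1 hij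
  -- summability of weight × bounded function
  have hmulsum : ∀ (i j : Λ), i ≠ j → ∀ (G : (Λ → ℕ) → ℝ), (∀ η, |G η| ≤ C) →
      Summable (fun η : Λ → ℕ =>
        nuProd m φ η * (η i : ℝ) * (m / 2 + (η j : ℝ)) * G η) := by
    intro i j hij G hG
    refine summable_abs_iff.mp (Summable.of_nonneg_of_le (fun η => abs_nonneg _)
      (fun η => ?_) ((hW i j hij).mul_left C))
    rw [abs_mul, abs_of_nonneg (hWnn i j η)]
    calc nuProd m φ η * (η i : ℝ) * (m / 2 + (η j : ℝ)) * |G η|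
        ≤ nuProd m φ η * (η i : ℝ) * (m / 2 + (η j : ℝ)) * C :=
          mul_le_mul_of_nonneg_left (hG η) (hWnn i j η)
      _ = C * (nuProd m φ η * (η i : ℝ) * (m / 2 + (η j : ℝ))) := by ring
  -- per-pair summand
  set t : Λ → Λ → (Λ → ℕ) → ℝ := fun i j η =>
    nuProd m φ η * (p i j * (η i : ℝ) * (m / 2 + (η j : ℝ)) *
      (f (moveParticle η i j) - f η)) with ht
  have htzero : ∀ i : Λ, t i i = fun _ => 0 := by
    intro i; funext η; rw [ht]; simp [hp_diag i]
  have habs : ∀ (i j : Λ) (η : Λ → ℕ),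
      |t i j η| ≤ (2 * C * p i j) * (nuProd m φ η * (η i : ℝ) * (m / 2 + (η j : ℝ))) := by
    intro i j η
    have h1 : |f (moveParticle η i j) - f η| ≤ 2 * C := by
      calc |f (moveParticle η i j) - f η| ≤ |f (moveParticle η i j)| + |f η| :=
            abs_sub _ _
        _ ≤ C + C := add_le_add (hC _) (hC _)
        _ = 2 * C := by ring
    have h2 : t i j η = (nuProd m φ η * (η i : ℝ) * (m / 2 + (η j : ℝ)) * p i j) *
        (f (moveParticle η i j) - f η) := by rw [ht]; ring
    rw [h2, abs_mul,
      abs_of_nonneg (mul_nonneg (hWnn i j η) (hp_nonneg i j))]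
    calc nuProd m φ η * (η i : ℝ) * (m / 2 + (η j : ℝ)) * p i j *
          |f (moveParticle η i j) - f η|
        ≤ nuProd m φ η * (η i : ℝ) * (m / 2 + (η j : ℝ)) * p i j * (2 * C) :=
          mul_le_mul_of_nonneg_left h1 (mul_nonneg (hWnn i j η) (hp_nonneg i j))
      _ = (2 * C * p i j) * (nuProd m φ η * (η i : ℝ) * (m / 2 + (η j : ℝ))) := by ring
  have hts : ∀ i j : Λ, Summable (t i j) := by
    intro i j
    by_cases hij : i = j
    · subst hij; rw [htzero i]; exact summable_zero
    · exact summable_abs_iff.mp (Summable.of_nonneg_of_le (fun η => abs_nonneg _)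
        (fun η => habs i j η) ((hW i j hij).mul_left (2 * C * p i j)))
  have hsummand : ∀ η : Λ → ℕ,
      nuProd m φ η * ∑ i, ∑ j, p i j * (η i : ℝ) * (m / 2 + (η j : ℝ)) *
        (f (moveParticle η i j) - f η) = ∑ i, ∑ j, t i j η := by
    intro η
    rw [Finset.mul_sum]
    refine Finset.sum_congr rfl fun i _ => ?_
    rw [Finset.mul_sum]
  constructor
  · -- absolute summability
    have hS : Summable (fun η : Λ → ℕ => ∑ i, ∑ j, |t i j η|) :=
      summable_sum fun i _ => summable_sum fun j _ => (hts i j).abs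
    refine Summable.of_nonneg_of_le (fun η => abs_nonneg _) (fun η => ?_) hS
    rw [hsummand η]
    calc |∑ i, ∑ j, t i j η| ≤ ∑ i, |∑ j, t i j η| := Finset.abs_sum_le_sum_abs _ _
      _ ≤ ∑ i, ∑ j, |t i j η| :=
          Finset.sum_le_sum fun i _ => Finset.abs_sum_le_sum_abs _ _
  · -- the tsum vanishes
    have h1 : (∑' η : Λ → ℕ, nuProd m φ η *
          ∑ i, ∑ j, p i j * (η i : ℝ) * (m / 2 + (η j : ℝ)) *
            (f (moveParticle η i j) - f η)) = ∑ i, ∑ j, ∑' η : Λ → ℕ, t i j η := by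
      rw [tsum_congr hsummand,
        Summable.tsum_finsetSum (fun i _ => summable_sum fun j _ => hts i j)]
      exact Finset.sum_congr rfl fun i _ => Summable.tsum_finsetSum fun j _ => hts i j
    -- per-pair evaluation
    have hpair : ∀ i j : Λ, (∑' η : Λ → ℕ, t i j η) =
        p i j * (∑' η : Λ → ℕ, nuProd m φ η * (η j : ℝ) * (m / 2 + (η i : ℝ)) * f η) -
        p i j * (∑' η : Λ → ℕ, nuProd m φ η * (η i : ℝ) * (m / 2 + (η j : ℝ)) * f η) := by
      intro i j
      by_cases hij : i = j
      · subst hij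
        rw [htzero i, tsum_zero, sub_self]
      · have hA := hmulsum i j hij (fun η => f (moveParticle η i j)) (fun η => hC _)
        have hB := hmulsum i j hij f hC
        have hsplit : ∀ η : Λ → ℕ, t i j η =
            p i j * (nuProd m φ η * (η i : ℝ) * (m / 2 + (η j : ℝ)) *
              f (moveParticle η i j)) -
            p i j * (nuProd m φ η * (η i : ℝ) * (m / 2 + (η j : ℝ)) * f η) := by
          intro η; rw [ht]; ring
        rw [tsum_congr hsplit, Summable.tsum_sub ((hA).mul_left (p i j)) ((hB).mul_left (p i j)),
          tsum_mul_left, tsum_mul_left, move_tsum hm hij f]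
    rw [h1]
    have hVs : ∀ i j : Λ, Summable (fun η : Λ → ℕ =>
        (nuProd m φ η * f η) * (p i j * ((η j : ℝ) * (m / 2 + (η i : ℝ)) -
          (η i : ℝ) * (m / 2 + (η j : ℝ))))) := by
      intro i j
      by_cases hij : i = j
      · have : (fun η : Λ → ℕ => (nuProd m φ η * f η) *
            (p i j * ((η j : ℝ) * (m / 2 + (η i : ℝ)) - (η i : ℝ) * (m / 2 + (η j : ℝ)))))
            = fun _ => 0 := by
          funext η; subst hij; ring
        rw [this]; exact summable_zero
      · refine Summable.congr
          (((hmulsum j i (Ne.symm hij) f hC).mul_left (p i j)).sub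
            ((hmulsum i j hij f hC).mul_left (p i j))) (fun η => by ring)
    have hVpair : ∀ i j : Λ,
        p i j * (∑' η : Λ → ℕ, nuProd m φ η * (η j : ℝ) * (m / 2 + (η i : ℝ)) * f η) -
        p i j * (∑' η : Λ → ℕ, nuProd m φ η * (η i : ℝ) * (m / 2 + (η j : ℝ)) * f η) =
        ∑' η : Λ → ℕ, (nuProd m φ η * f η) * (p i j * ((η j : ℝ) * (m / 2 + (η i : ℝ)) -
          (η i : ℝ) * (m / 2 + (η j : ℝ)))) := by
      intro i j
      by_cases hij : i = j
      · subst hij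
        rw [sub_self]
        symm
        have : ∀ η : Λ → ℕ, (nuProd m φ η * f η) *
            (p i i * ((η i : ℝ) * (m / 2 + (η i : ℝ)) - (η i : ℝ) * (m / 2 + (η i : ℝ))))
            = 0 := fun η => by ring
        rw [tsum_congr this, tsum_zero]
      · have hB1 := hmulsum j i (Ne.symm hij) f hC
        have hB2 := hmulsum i j hij f hC
        have hpt : ∀ η : Λ → ℕ, (nuProd m φ η * f η) *
            (p i j * ((η j : ℝ) * (m / 2 + (η i : ℝ)) - (η i : ℝ) * (m / 2 + (η j : ℝ)))) =
            p i j * (nuProd m φ η * (η j : ℝ) * (m / 2 + (η i : ℝ)) * f η) -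
            p i j * (nuProd m φ η * (η i : ℝ) * (m / 2 + (η j : ℝ)) * f η) :=
          fun η => by ring
        rw [tsum_congr hpt, Summable.tsum_sub (hB1.mul_left (p i j)) (hB2.mul_left (p i j)),
          tsum_mul_left, tsum_mul_left]
    calc ∑ i, ∑ j, ∑' η : Λ → ℕ, t i j η
        = ∑ i, ∑ j, ∑' η : Λ → ℕ, (nuProd m φ η * f η) *
            (p i j * ((η j : ℝ) * (m / 2 + (η i : ℝ)) - (η i : ℝ) * (m / 2 + (η j : ℝ)))) := by
          refine Finset.sum_congr rfl fun i _ => Finset.sum_congr rfl fun j _ => ?_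
          rw [hpair i j, hVpair i j]
      _ = ∑' η : Λ → ℕ, ∑ i, ∑ j, (nuProd m φ η * f η) *
            (p i j * ((η j : ℝ) * (m / 2 + (η i : ℝ)) - (η i : ℝ) * (m / 2 + (η j : ℝ)))) := by
          rw [Summable.tsum_finsetSum (fun i _ => summable_sum fun j _ => hVs i j)]
          exact Finset.sum_congr rfl fun i _ => (Summable.tsum_finsetSum fun j _ => hVs i j).symm
      _ = 0 := by
          have hz : ∀ η : Λ → ℕ, ∑ i, ∑ j, (nuProd m φ η * f η) *
              (p i j * ((η j : ℝ) * (m / 2 + (η i : ℝ)) -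
                (η i : ℝ) * (m / 2 + (η j : ℝ)))) = 0 := by
            intro η
            have := cancel_sum (m := m) p hp_ds η
            calc ∑ i, ∑ j, (nuProd m φ η * f η) *
                  (p i j * ((η j : ℝ) * (m / 2 + (η i : ℝ)) -
                    (η i : ℝ) * (m / 2 + (η j : ℝ))))
                = (nuProd m φ η * f η) * ∑ i, ∑ j,
                    p i j * ((η j : ℝ) * (m / 2 + (η i : ℝ)) -
                      (η i : ℝ) * (m / 2 + (η j : ℝ))) := by
                  rw [Finset.mul_sum]
                  exact Finset.sum_congr rfl fun i _ => by rw [Finset.mul_sum]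
              _ = 0 := by rw [this, mul_zero]
          rw [tsum_congr hz, tsum_zero]
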